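/- If for every $n\ge 1$, every $a\in\mathcal{A}$, and every constraint index $i$, the event $|g_i(a) - \mu_{n-1}(a,i)| < \beta_{n-1}(a,i)$ holds (so that $g_i(a)\in Q_n(a,i)$ for all $n,a,i$), and the initial safe set $S_0$ satisfies $g_i(a)\ge 0$ for all $a\in S_0$ and all $i$, then every parameter in $S_n$ (defined by the recursive Lipschitz expansion $S_n = \bigcap_i\bigcup_{a\in S_{n-1}}\{a' : l_n(a,i)-L\|a-a'\|\ge 0\}$ with $l_n(a,i)=\min C_n(a,i)$, $C_n = C_{n-1}\cap Q_n$, $C_0(a,i)=[0,\infty)$ for $a\in S_0$ and $\mathbb{R}$ otherwise) satisfies $g_i(a')\ge 0$ for all $i$; i.e., on the event that all confidence intervals are valid, every element of every safe set $S_n$ is truly safe. -/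
import Mathlib


open Classical

/-- Deterministic core of Theorem 1 (safety of CoLSafe): on the event that all confidence
intervals are valid, every element of every safe set `S n` is truly safe. -/

theorem stmt14 {d : ℕ} {I : Type*} [Finite I]
    (𝒜 : Set (EuclideanSpace ℝ (Fin d))) (h𝒜 : 𝒜.Finite)
    (g : I → EuclideanSpace ℝ (Fin d) → ℝ) (L : ℝ) (hL : 0 ≤ L)
    (hLip : ∀ i a b, |g i a - g i b| ≤ L * ‖a - b‖)
    (μ' β : ℕ → EuclideanSpace ℝ (Fin d) → I → ℝ)
    (S0 : Set (EuclideanSpace ℝ (Fin d))) (hS0sub : S0 ⊆ 𝒜)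
    (hS0safe : ∀ a ∈ S0, ∀ i : I, 0 ≤ g i a)
    (hconf : ∀ n a i, |g i a - μ' n a i| < β n a i)
    (C : ℕ → EuclideanSpace ℝ (Fin d) → I → Set ℝ)
    (S : ℕ → Set (EuclideanSpace ℝ (Fin d)))
    (hC0 : ∀ a i, C 0 a i = if a ∈ S0 then Set.Ici (0 : ℝ) else Set.univ)
    (hCrec : ∀ n a i, C (n + 1) a i =
      C n a i ∩ Set.Icc (μ' n a i - β n a i) (μ' n a i + β n a i))
    (hS0' : S 0 = S0)
    (hSrec : ∀ n, S (n + 1) = ⋂ i : I, ⋃ a ∈ S n,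
      {a' ∈ 𝒜 | 0 ≤ sInf (C (n + 1) a i) - L * ‖a - a'‖}) :
    ∀ n, ∀ a' ∈ S n, ∀ i : I, 0 ≤ g i a' := by
  have hmem : ∀ n a i, g i a ∈ C n a i := by
    intro n
    induction n with
    | zero =>
      intro a i
      rw [hC0]
      split_ifs with h
      · exact hS0safe a h i
      · trivial
    | succ n ih =>
      intro a i
      rw [hCrec]
      refine ⟨ih a i, ?_⟩
      have := abs_lt.mp (hconf n a i)
      constructor <;> linarith [this.1, this.2]
  intro n
  cases n with
  | zero =>
    intro a' ha' i
    rw [hS0'] at ha'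
    exact hS0safe a' ha' i
  | succ n =>
    intro a' ha' i
    rw [hSrec] at ha'
    have h1 := Set.mem_iInter.mp ha' i
    obtain ⟨ha𝒜, a, haS, hineq⟩ := by
      simpa using h1
    have hbdd : BddBelow (C (n + 1) a i) := by
      rw [hCrec]
      exact BddBelow.mono Set.inter_subset_right bddBelow_Icc
    have hle : sInf (C (n + 1) a i) ≤ g i a := csInf_le hbdd (hmem (n + 1) a i)
    have hlip := (le_abs_self (g i a - g i a')).trans (hLip i a a')
    linarith
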